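/- If two one-sided topological Markov shifts (X_A, σ_A) and (X_B, σ_B) (A, B irreducible non-permutation {0,1}-matrices) are coded equivalent, then they are continuously orbit equivalent. -/

import Mathlib

namespace TMS

/-- A `{0,1}` transition matrix on `N` symbols, as a `Bool`-valued function. -/
abbrev Mat (N : ℕ) := Fin N → Fin N → Bool

/-- A finite word is (locally) admissible: all consecutive transitions are allowed. -/
def Adm {N : ℕ} (A : Mat N) (w : List (Fin N)) : Prop :=
  List.IsChain (fun a b => A a b = true) w

instance {N : ℕ} (A : Mat N) (w : List (Fin N)) : Decidable (Adm A w) :=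
  inferInstanceAs (Decidable (List.IsChain _ w))

/-- The one-sided shift space `X_A`. -/
def SSpace {N : ℕ} (A : Mat N) : Set (ℕ → Fin N) :=
  {x | ∀ n, A (x n) (x (n + 1)) = true}

/-- The shift on sequences. -/
def shift {N : ℕ} (x : ℕ → Fin N) : ℕ → Fin N := fun n => x (n + 1)

/-- The shift as a self-map of the shift space. -/
def shiftS {N : ℕ} (A : Mat N) (x : ↥(SSpace A)) : ↥(SSpace A) :=
  ⟨shift x.1, fun n => x.2 (n + 1)⟩

/-- `x` begins with the finite word `w`. -/
def Begins {N : ℕ} (x : ℕ → Fin N) (w : List (Fin N)) : Prop :=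
  ∀ i (h : i < w.length), x i = w.get ⟨i, h⟩

/-- A word belongs to `B_*(X_A)`: it occurs at the beginning of some point of `X_A`. -/
def AdmX {N : ℕ} (A : Mat N) (w : List (Fin N)) : Prop :=
  ∃ x ∈ SSpace A, Begins x w

/-- The cylinder set `U_w ⊂ X_A`. -/
def Cyl {N : ℕ} (A : Mat N) (w : List (Fin N)) : Set (ℕ → Fin N) :=
  {x ∈ SSpace A | Begins x w}

/-- A finite family of words is a prefix code: the words are pairwise distinct and
no word is an initial segment of another. -/
def IsPrefixCode {N M : ℕ} (ω : Fin M → List (Fin N)) : Prop :=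
  Function.Injective ω ∧ ∀ i j : Fin M, i ≠ j → ¬ (ω i <+: ω j)

/-- Starting position of the `n`-th block in the factorization of a point along
the index sequence `f`. -/
def pos {N M : ℕ} (ω : Fin M → List (Fin N)) (f : ℕ → Fin M) : ℕ → ℕ
  | 0 => 0
  | n + 1 => pos ω f n + (ω (f n)).length

/-- The point `x` factors as the infinite concatenation `ω (f 0) ω (f 1) ⋯`. -/
def Factors {N M : ℕ} (ω : Fin M → List (Fin N)) (x : ℕ → Fin N) (f : ℕ → Fin M) : Prop :=
  ∀ n, Begins (fun k => x (pos ω f n + k)) (ω (f n))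

/-- Matrix irreducibility: from any symbol there is an admissible path to any other. -/
def IrreducibleMat {N : ℕ} (A : Mat N) : Prop :=
  ∀ i j : Fin N, ∃ w : List (Fin N), Adm A (i :: (w ++ [j]))

/-- Permutation matrix: every row and every column has exactly one nonzero entry. -/
def IsPermMat {N : ℕ} (A : Mat N) : Prop :=
  (∀ i, ∃! j, A i j = true) ∧ (∀ j, ∃! i, A i j = true)

/-- A right Markov code for `(X_A, σ_A)`: a prefix code of nonempty admissible words
with the unique factorization property, shift invariance, and irreducibility. -/
structure IsRightMarkovCode {N M : ℕ} (A : Mat N) (ω : Fin M → List (Fin N)) : Prop where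
  adm : ∀ i, AdmX A (ω i)
  ne : ∀ i, ω i ≠ []
  prefixCode : IsPrefixCode ω
  uniqueFact : ∀ γ, AdmX A γ → ∃ η, AdmX A (γ ++ η) ∧
      ∃! l : List (Fin M), γ ++ η = (l.map ω).flatten
  shiftInv : ∃ L : ℕ, 0 < L ∧ ∀ l : List (Fin M), l.length = L → AdmX A ((l.map ω).flatten) →
      ∃ l' : List (Fin M), ((l.map ω).flatten).tail = (l'.map ω).flatten
  irr : ∀ i j, ∃ l : List (Fin M), AdmX A (ω i ++ (l.map ω).flatten ++ ω j)

/-- The induced matrix `A(C)`: `A(C)(i,j) = 1` iff `ω i ω j` is admissible. -/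
def matC {N M : ℕ} (A : Mat N) (ω : Fin M → List (Fin N)) : Mat M :=
  fun i j => decide (Adm A (ω i ++ ω j))

/-- Continuous orbit equivalence of one-sided topological Markov shifts. -/
def COE {N N' : ℕ} (A : Mat N) (B : Mat N') : Prop :=
  ∃ h : ↥(SSpace A) ≃ₜ ↥(SSpace B),
    (∃ k₁ l₁ : ↥(SSpace A) → ℕ, Continuous k₁ ∧ Continuous l₁ ∧
      ∀ x, (shiftS B)^[k₁ x] (h (shiftS A x)) = (shiftS B)^[l₁ x] (h x)) ∧
    (∃ k₂ l₂ : ↥(SSpace B) → ℕ, Continuous k₂ ∧ Continuous l₂ ∧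
      ∀ y, (shiftS A)^[k₂ y] (h.symm (shiftS B y)) = (shiftS A)^[l₂ y] (h.symm y))

/-- Elementary coded equivalence. -/
def ElemCodedEq {N N' : ℕ} (A : Mat N) (B : Mat N') : Prop :=
  ∃ (M₁ M₂ : ℕ) (ω₁ : Fin M₁ → List (Fin N)) (ω₂ : Fin M₂ → List (Fin N')),
    IsRightMarkovCode A ω₁ ∧ IsRightMarkovCode B ω₂ ∧
    ∃ h : ↥(SSpace (matC A ω₁)) ≃ₜ ↥(SSpace (matC B ω₂)),
      ∀ y, h (shiftS (matC A ω₁) y) = shiftS (matC B ω₂) (h y)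

/-- A matrix of arbitrary size. -/
abbrev MatS := Σ n : ℕ, Mat n

/-- Irreducible non-permutation condition, bundled. -/
def IrrNP (p : MatS) : Prop := IrreducibleMat p.2 ∧ ¬ IsPermMat p.2

/-- Coded equivalence: a chain of elementary coded equivalences through irreducible
non-permutation matrices. -/
def CodedEq : MatS → MatS → Prop :=
  Relation.ReflTransGen (fun p q => IrrNP p ∧ IrrNP q ∧ ElemCodedEq p.2 q.2)



/-! ### Auxiliary development -/

section Aux

variable {N M : ℕ} {A : Mat N} {ω : Fin M → List (Fin N)}

lemma begins_iff {x : ℕ → Fin N} {w : List (Fin N)} :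
    Begins x w ↔ ∀ i (h : i < w.length), x i = w[i] := by
  simp only [Begins, List.get_eq_getElem]

lemma adm_of_begins {x : ℕ → Fin N} (hx : x ∈ SSpace A) {w : List (Fin N)}
    (hw : Begins x w) : Adm A w := by
  rw [begins_iff] at hw
  rw [Adm, List.isChain_iff_getElem]
  intro i h
  have h2 : i + 1 < w.length := by omega
  rw [← hw i (by omega), ← hw (i + 1) h2]
  exact hx i

lemma begins_comparable {x : ℕ → Fin N} {u v : List (Fin N)} (hu : Begins x u)
    (hv : Begins x v) (h : u.length ≤ v.length) : u <+: v := by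
  rw [begins_iff] at hu hv
  rw [List.prefix_iff_eq_take]
  refine List.ext_get (by simp [Nat.min_eq_left h]) fun i h1 h2 => ?_
  simp only [List.get_eq_getElem, List.getElem_take]
  rw [← hu i (by simpa using h1), ← hv i (by omega)]

lemma begins_of_prefix {x : ℕ → Fin N} {u v : List (Fin N)} (h : u <+: v)
    (hv : Begins x v) : Begins x u := by
  rw [begins_iff] at hv ⊢
  intro i hi
  rw [h.getElem hi]
  exact hv i (lt_of_lt_of_le hi h.length_le)

lemma begins_append {x : ℕ → Fin N} {u v : List (Fin N)} :
    Begins x (u ++ v) ↔ Begins x u ∧ Begins (fun k => x (u.length + k)) v := by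
  simp only [begins_iff]
  constructor
  · intro h
    constructor
    · intro i hi
      rw [h i (by simp; omega), List.getElem_append_left hi]
    · intro i hi
      rw [h (u.length + i) (by simp; omega), List.getElem_append_right (by omega)]
      congr 1
      omega
  · rintro ⟨h1, h2⟩ i hi
    simp only [List.length_append] at hi
    rcases lt_or_ge i u.length with hc | hc
    · rw [List.getElem_append_left hc]
      exact h1 i hc
    · rw [List.getElem_append_right hc]
      have := h2 (i - u.length) (by omega)
      rw [← this]
      congr 1
      omega

lemma begins_tail {x : ℕ → Fin N} {w : List (Fin N)} (h : Begins x w) :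
    Begins (shift x) w.tail := by
  rw [begins_iff] at h ⊢
  intro i hi
  have hlen : i + 1 < w.length := by
    have := List.length_tail (l := w); omega
  rw [List.getElem_tail]
  exact h (i + 1) hlen

/-- Concatenation of the first `n` code blocks. -/
def cw (ω : Fin M → List (Fin N)) (f : ℕ → Fin M) (n : ℕ) : List (Fin N) :=
  ((List.range n).map fun i => ω (f i)).flatten

lemma cw_zero (f : ℕ → Fin M) : cw ω f 0 = [] := rfl

lemma cw_succ (f : ℕ → Fin M) (n : ℕ) : cw ω f (n + 1) = cw ω f n ++ ω (f n) := by
  simp [cw, List.range_succ]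

lemma cw_succ' (f : ℕ → Fin M) (n : ℕ) :
    cw ω f (n + 1) = ω (f 0) ++ cw ω (shift f) n := by
  simp [cw, List.range_succ_eq_map, List.map_map, shift, Function.comp_def,
    Nat.succ_eq_add_one]

lemma length_cw (f : ℕ → Fin M) (n : ℕ) : (cw ω f n).length = pos ω f n := by
  induction n with
  | zero => rfl
  | succ n ih => rw [cw_succ, List.length_append, ih]; rfl

lemma cw_prefix (f : ℕ → Fin M) {m n : ℕ} (h : m ≤ n) : cw ω f m <+: cw ω f n := by
  induction h with
  | refl => exact List.prefix_refl _
  | step _ ih => rw [cw_succ]; exact ih.trans (List.prefix_append _ _)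

lemma le_pos (hne : ∀ i, ω i ≠ []) (f : ℕ → Fin M) (n : ℕ) : n ≤ pos ω f n := by
  induction n with
  | zero => exact Nat.zero_le _
  | succ n ih =>
    have : 0 < (ω (f n)).length := List.length_pos_iff.mpr (hne _)
    show n + 1 ≤ pos ω f n + (ω (f n)).length
    omega

/-- The infinite concatenation of code blocks along `f`. -/
def concat (hN : 0 < N) (ω : Fin M → List (Fin N)) (f : ℕ → Fin M) : ℕ → Fin N :=
  fun k => (cw ω f (k + 1)).getD k ⟨0, hN⟩

variable {hN : 0 < N}

lemma concat_eq_get (hne : ∀ i, ω i ≠ []) {f : ℕ → Fin M} {n k : ℕ}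
    (hk : k < pos ω f n) :
    concat hN ω f k = (cw ω f n)[k]'(by rw [length_cw]; exact hk) := by
  have h1 : k < (cw ω f (k + 1)).length := by
    rw [length_cw]; exact lt_of_lt_of_le (Nat.lt_succ_self k) (le_pos hne f (k + 1))
  rw [concat, List.getD_eq_getElem _ _ h1]
  rcases le_total (k + 1) n with h | h
  · exact (cw_prefix f h).getElem h1
  · exact ((cw_prefix f h).getElem (by rw [length_cw]; exact hk)).symm

lemma begins_concat (hne : ∀ i, ω i ≠ []) (f : ℕ → Fin M) (n : ℕ) :
    Begins (concat hN ω f) (cw ω f n) := by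
  rw [begins_iff]
  intro i hi
  exact concat_eq_get hne (by rw [← length_cw]; exact hi)

lemma concat_mem (hne : ∀ i, ω i ≠ []) {f : ℕ → Fin M}
    (hf : f ∈ SSpace (matC A ω)) : concat hN ω f ∈ SSpace A := by
  have hjun : ∀ n, Adm A (ω (f n) ++ ω (f (n + 1))) := fun n => of_decide_eq_true (hf n)
  have hadm : ∀ n, Adm A (cw ω f (n + 1)) := by
    intro n
    induction n with
    | zero =>
      have h0 := (List.isChain_append.mp (hjun 0)).1
      have h1 : cw ω f 1 = ω (f 0) := by rw [cw_succ, cw_zero, List.nil_append]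
      rw [Adm, h1]; exact h0
    | succ n ih =>
      rw [cw_succ, Adm, List.isChain_append]
      obtain ⟨hl, hr, hmid⟩ := List.isChain_append.mp (hjun n)
      refine ⟨ih, (List.isChain_append.mp (hjun (n + 1))).1, ?_⟩
      intro a ha b hb
      refine hmid a ?_ b hb
      rw [cw_succ, List.getLast?_append] at ha
      rcases hx : (ω (f n)).getLast? with _ | c
      · exact absurd (List.getLast?_eq_none_iff.mp hx) (hne _)
      · rw [hx] at ha
        simp at ha
        simp [ha]
  intro k
  have hlen : k + 2 ≤ pos ω f (k + 2) := le_pos hne f (k + 2)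
  have h1 := concat_eq_get (hN := hN) hne (f := f) (n := k + 2) (k := k)
    (show k < pos ω f (k + 2) by omega)
  have h2 := concat_eq_get (hN := hN) hne (f := f) (n := k + 2) (k := k + 1)
    (show k + 1 < pos ω f (k + 2) by omega)
  rw [h1, h2]
  have := List.isChain_iff_getElem.mp (show Adm A (cw ω f (k + 2)) from hadm (k + 1)) k
    (by rw [length_cw]; omega)
  simpa using this

lemma pos_shift (f : ℕ → Fin M) (n : ℕ) :
    pos ω f (n + 1) = (ω (f 0)).length + pos ω (shift f) n := by
  rw [← length_cw, cw_succ', List.length_append, length_cw]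

lemma concat_shift (hne : ∀ i, ω i ≠ []) (f : ℕ → Fin M) (k : ℕ) :
    concat hN ω (shift f) k = concat hN ω f ((ω (f 0)).length + k) := by
  have hk1 : k < pos ω (shift f) (k + 1) := lt_of_lt_of_le (Nat.lt_succ_self k)
    (le_pos hne _ _)
  have hk2 : (ω (f 0)).length + k < pos ω f (k + 2) := by
    rw [pos_shift]
    have := le_pos hne (shift f) (k + 1)
    omega
  rw [concat_eq_get hne hk1, concat_eq_get hne hk2]
  have hcw : cw ω f (k + 2) = ω (f 0) ++ cw ω (shift f) (k + 1) := cw_succ' f (k + 1)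
  simp only [hcw]
  rw [List.getElem_append_right (by omega)]
  congr 1
  omega

lemma shift_iterate (f : ℕ → Fin M) (m : ℕ) : shift^[m + 1] f = shift^[m] (shift f) :=
  Function.iterate_succ_apply shift m f

lemma concat_iterate (hne : ∀ i, ω i ≠ []) (f : ℕ → Fin M) (m k : ℕ) :
    concat hN ω (shift^[m] f) k = concat hN ω f (pos ω f m + k) := by
  induction m generalizing f k with
  | zero => simp [pos]
  | succ m ih =>
    rw [shift_iterate, ih (shift f) k, concat_shift hne, pos_shift]
    congr 1
    omega

lemma concat_first (hne : ∀ i, ω i ≠ []) (hc : IsPrefixCode ω) {f g : ℕ → Fin M}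
    (h : concat hN ω f = concat hN ω g) : f 0 = g 0 := by
  have h1 : cw ω f 1 = ω (f 0) := by rw [cw_succ, cw_zero, List.nil_append]
  have h2 : cw ω g 1 = ω (g 0) := by rw [cw_succ, cw_zero, List.nil_append]
  have hf : Begins (concat hN ω f) (ω (f 0)) := h1 ▸ begins_concat hne f 1
  have hg : Begins (concat hN ω f) (ω (g 0)) := by
    rw [h]; exact h2 ▸ begins_concat hne g 1
  by_contra hne0
  rcases le_total (ω (f 0)).length (ω (g 0)).length with hl | hl
  · exact hc.2 _ _ hne0 (begins_comparable hf hg hl)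
  · exact hc.2 _ _ (Ne.symm hne0) (begins_comparable hg hf hl)

lemma concat_inj (hne : ∀ i, ω i ≠ []) (hc : IsPrefixCode ω) {f g : ℕ → Fin M}
    (h : concat hN ω f = concat hN ω g) : f = g := by
  suffices h' : ∀ n (f g : ℕ → Fin M), concat hN ω f = concat hN ω g → f n = g n by
    funext n; exact h' n f g h
  intro n
  induction n with
  | zero => exact fun f g h => concat_first hne hc h
  | succ n ih =>
    intro f g h
    have h0 : f 0 = g 0 := concat_first hne hc h
    have hs : concat hN ω (shift f) = concat hN ω (shift g) := by
      funext k
      rw [concat_shift hne, concat_shift hne, h, h0]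
    exact ih (shift f) (shift g) hs

/-! ### Factorization of points of `X_A` -/

lemma exists_first (hω : IsRightMarkovCode A ω) {x : ℕ → Fin N}
    (hx : x ∈ SSpace A) : ∃ i, Begins x (ω i) := by
  set n := 1 + Finset.univ.sup (fun i : Fin M => (ω i).length) with hn
  set γ := List.ofFn (fun j : Fin n => x j) with hγ
  have hγlen : γ.length = n := by simp [hγ]
  have hγb : Begins x γ := by
    rw [hγ, begins_iff]
    intro i hi
    rw [List.getElem_ofFn]
  obtain ⟨η, hadm2, l, hl, -⟩ := hω.uniqueFact γ ⟨x, hx, hγb⟩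
  have hlne : l ≠ [] := by
    rintro rfl
    simp only [List.map_nil, List.flatten_nil, List.append_eq_nil_iff] at hl
    have : γ.length = 0 := by rw [hl.1]; rfl
    omega
  obtain ⟨i, l', rfl⟩ := List.exists_cons_of_ne_nil hlne
  refine ⟨i, ?_⟩
  have hpre : ω i <+: γ ++ η := by
    rw [hl, List.map_cons, List.flatten_cons]
    exact List.prefix_append _ _
  have hilen : (ω i).length ≤ γ.length := by
    rw [hγlen, hn]
    have h2 : (ω i).length ≤ Finset.univ.sup (fun i : Fin M => (ω i).length) :=
      Finset.le_sup (f := fun i : Fin M => (ω i).length) (Finset.mem_univ i)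
    omega
  exact begins_of_prefix
    (List.prefix_of_prefix_length_le hpre (List.prefix_append γ η) hilen) hγb

variable (hω : IsRightMarkovCode A ω)

/-- The first code block of a point of `X_A`. -/
noncomputable def firstIdx (x : ↥(SSpace A)) : Fin M :=
  (exists_first hω x.2).choose

lemma firstIdx_spec (x : ↥(SSpace A)) : Begins x.1 (ω (firstIdx hω x)) :=
  (exists_first hω x.2).choose_spec

/-- Remove the first code block. -/
noncomputable def stepPt (x : ↥(SSpace A)) : ↥(SSpace A) :=
  (shiftS A)^[(ω (firstIdx hω x)).length] x

/-- The sequence of code blocks of a point of `X_A`. -/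
noncomputable def fseq (x : ↥(SSpace A)) : ℕ → Fin M :=
  fun n => firstIdx hω ((stepPt hω)^[n] x)

lemma shiftS_iter_val (x : ↥(SSpace A)) (k : ℕ) :
    ((shiftS A)^[k] x).1 = fun n => x.1 (k + n) := by
  induction k with
  | zero => simp
  | succ k ih =>
    rw [Function.iterate_succ_apply']
    funext n
    show ((shiftS A)^[k] x).1 (n + 1) = x.1 (k + 1 + n)
    rw [ih]
    show x.1 (k + (n + 1)) = x.1 (k + 1 + n)
    exact congrArg x.1 (by omega)

lemma stepPt_val (x : ↥(SSpace A)) :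
    (stepPt hω x).1 = fun n => x.1 ((ω (firstIdx hω x)).length + n) :=
  shiftS_iter_val x _

lemma fseq_zero (x : ↥(SSpace A)) : fseq hω x 0 = firstIdx hω x := rfl

lemma fseq_succ (x : ↥(SSpace A)) (n : ℕ) :
    fseq hω x (n + 1) = fseq hω (stepPt hω x) n := by
  simp [fseq, Function.iterate_succ_apply]

lemma shift_fseq (x : ↥(SSpace A)) :
    shift (fseq hω x) = fseq hω (stepPt hω x) :=
  funext fun n => fseq_succ hω x n

lemma begins_cw_fseq : ∀ (n : ℕ) (x : ↥(SSpace A)), Begins x.1 (cw ω (fseq hω x) n) := by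
  intro n
  induction n with
  | zero => intro x i hi; simp [cw_zero] at hi
  | succ n ih =>
    intro x
    rw [cw_succ', shift_fseq, fseq_zero]
    refine begins_append.mpr ⟨firstIdx_spec hω x, ?_⟩
    have := ih (stepPt hω x)
    rwa [stepPt_val hω x] at this

lemma fseq_mem (x : ↥(SSpace A)) : fseq hω x ∈ SSpace (matC A ω) := by
  intro n
  have hb := begins_cw_fseq hω (n + 2) x
  have hsplit : cw ω (fseq hω x) (n + 2) =
      cw ω (fseq hω x) n ++ (ω (fseq hω x n) ++ ω (fseq hω x (n + 1))) := by
    rw [show n + 2 = n + 1 + 1 from rfl, cw_succ, cw_succ, List.append_assoc]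
  rw [hsplit] at hb
  obtain ⟨-, hb2⟩ := begins_append.mp hb
  set y := (shiftS A)^[(cw ω (fseq hω x) n).length] x with hy
  have hyv : y.1 = fun k => x.1 ((cw ω (fseq hω x) n).length + k) := shiftS_iter_val x _
  have : Adm A (ω (fseq hω x n) ++ ω (fseq hω x (n + 1))) :=
    adm_of_begins y.2 (by rw [hyv]; exact hb2)
  exact decide_eq_true this

lemma concat_fseq (x : ↥(SSpace A)) : concat hN ω (fseq hω x) = x.1 := by
  funext k
  have hk : k < pos ω (fseq hω x) (k + 1) :=
    lt_of_lt_of_le (Nat.lt_succ_self k) (le_pos hω.ne _ _)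
  rw [concat_eq_get hω.ne hk]
  have hb := begins_iff.mp (begins_cw_fseq hω (k + 1) x) k (by rw [length_cw]; exact hk)
  exact hb.symm

/-! ### Topology -/

lemma isClosed_sspace (A : Mat N) : IsClosed (SSpace A) := by
  have hrw : SSpace A = ⋂ n, (fun x : ℕ → Fin N => (x n, x (n + 1))) ⁻¹'
      {p : Fin N × Fin N | A p.1 p.2 = true} := by
    ext x
    simp [SSpace, Set.mem_iInter, Set.mem_preimage]
  rw [hrw]
  exact isClosed_iInter fun n =>
    (isClosed_discrete _).preimage ((continuous_apply n).prodMk (continuous_apply (n + 1)))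

lemma cw_congr {f g : ℕ → Fin M} {n : ℕ} (h : ∀ i < n, f i = g i) :
    cw ω f n = cw ω g n := by
  induction n with
  | zero => rfl
  | succ n ih =>
    rw [cw_succ, cw_succ, ih fun i hi => h i (by omega), h n (by omega)]

lemma concat_depends {f g : ℕ → Fin M} {k : ℕ} (h : ∀ i ≤ k, f i = g i) :
    concat hN ω f k = concat hN ω g k := by
  rw [concat, concat, cw_congr fun i hi => h i (by omega)]

lemma continuous_concat :
    Continuous (fun f : ↥(SSpace (matC A ω)) => concat hN ω f.1) := by
  refine continuous_pi fun k => ?_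
  have hrw : (fun f : ↥(SSpace (matC A ω)) => concat hN ω f.1 k) =
      (fun v : Fin (k + 1) → Fin M =>
        concat hN ω (fun n => v ⟨n % (k + 1), Nat.mod_lt _ (Nat.succ_pos k)⟩) k) ∘
      (fun f : ↥(SSpace (matC A ω)) => fun i : Fin (k + 1) => f.1 i) := by
    funext f
    refine concat_depends fun i hi => ?_
    show f.1 i = f.1 (i % (k + 1))
    rw [Nat.mod_eq_of_lt (by omega)]
  rw [hrw]
  exact continuous_of_discreteTopology.comp
    (continuous_pi fun i => (continuous_apply (i : ℕ)).comp continuous_subtype_val)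

/-- The bijection between `X_{A(C)}` and `X_A` given by block concatenation. -/
noncomputable def codeEquiv (hN : 0 < N) (hω : IsRightMarkovCode A ω) :
    ↥(SSpace (matC A ω)) ≃ ↥(SSpace A) where
  toFun f := ⟨concat hN ω f.1, concat_mem hω.ne f.2⟩
  invFun x := ⟨fseq hω x, fseq_mem hω x⟩
  left_inv f := Subtype.ext (concat_inj hω.ne hω.prefixCode
    (concat_fseq hω ⟨concat hN ω f.1, concat_mem hω.ne f.2⟩))
  right_inv x := Subtype.ext (concat_fseq hω x)

/-- The block concatenation homeomorphism. -/
noncomputable def codeHomeo (hN : 0 < N) (hω : IsRightMarkovCode A ω) :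
    ↥(SSpace (matC A ω)) ≃ₜ ↥(SSpace A) :=
  haveI : CompactSpace ↥(SSpace (matC A ω)) :=
    isCompact_iff_compactSpace.mp (isClosed_sspace (matC A ω)).isCompact
  Continuous.homeoOfEquivCompactToT2 (f := codeEquiv hN hω)
    (Continuous.subtype_mk continuous_concat _)

lemma codeHomeo_apply (hN : 0 < N) (hω : IsRightMarkovCode A ω)
    (f : ↥(SSpace (matC A ω))) : (codeHomeo hN hω f).1 = concat hN ω f.1 := rfl

lemma codeHomeo_symm_apply (hN : 0 < N) (hω : IsRightMarkovCode A ω)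
    (x : ↥(SSpace A)) : ((codeHomeo hN hω).symm x).1 = fseq hω x := rfl

lemma shift_iter_apply (m : ℕ) (f : ℕ → Fin M) : shift^[m] f = fun n => f (m + n) := by
  induction m generalizing f with
  | zero => funext n; simp
  | succ m ih =>
    rw [shift_iterate, ih (shift f)]
    funext n
    show f (m + n + 1) = f (m + 1 + n)
    exact congrArg f (by omega)

lemma ofFn_flatten (n : ℕ) (f : ℕ → Fin M) :
    ((List.ofFn (fun i : Fin n => f i)).map ω).flatten = cw ω f n := by
  induction n generalizing f with
  | zero => rfl
  | succ n ih =>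
    simp only [List.ofFn_succ, List.map_cons, List.flatten_cons, Fin.val_succ, Fin.val_zero]
    rw [cw_succ']
    congr 1
    have := ih (shift f)
    simpa [shift] using this

lemma blocks_match : ∀ (l : List (Fin M)) (y : ↥(SSpace A)),
    Begins y.1 ((l.map ω).flatten) → ∀ i (h : i < l.length),
      l.get ⟨i, h⟩ = fseq hω y i := by
  intro l
  induction l with
  | nil => intro y _ i h; simp at h
  | cons a t ih =>
    intro y hb i h
    rw [List.map_cons, List.flatten_cons] at hb
    obtain ⟨h1, h2⟩ := begins_append.mp hb
    have ha0 : a = firstIdx hω y := by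
      by_contra hne0
      have hfs := firstIdx_spec hω y
      rcases le_total (ω a).length (ω (firstIdx hω y)).length with hl | hl
      · exact hω.prefixCode.2 a _ hne0 (begins_comparable h1 hfs hl)
      · exact hω.prefixCode.2 _ a (fun hEq => hne0 hEq.symm) (begins_comparable hfs h1 hl)
    cases i with
    | zero => simpa [fseq_zero] using ha0
    | succ i =>
      have hstep : Begins (stepPt hω y).1 ((t.map ω).flatten) := by
        rw [stepPt_val hω y, ← ha0]
        exact h2
      rw [fseq_succ]
      have := ih (stepPt hω y) hstep i (by simpa using h)
      simpa using this

end Aux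

/-! ### Generalities on continuous orbit equivalence -/

section COEGen

lemma continuous_shiftS {N : ℕ} (A : Mat N) : Continuous (shiftS A) := by
  refine Continuous.subtype_mk ?_ _
  refine continuous_pi fun n => ?_
  show Continuous fun x : ↥(SSpace A) => x.1 (n + 1)
  exact (continuous_apply (n + 1)).comp continuous_subtype_val

lemma cont_select {X Z : Type*} [TopologicalSpace X] [TopologicalSpace Z]
    {g : X → ℕ} (hg : Continuous g) {F : ℕ → X → Z} (hF : ∀ n, Continuous (F n)) :
    Continuous fun x => F (g x) x := by
  rw [continuous_iff_continuousAt]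
  intro x₀
  have hopen : IsOpen (g ⁻¹' {g x₀}) := (isOpen_discrete _).preimage hg
  refine ContinuousAt.congr ((hF (g x₀)).continuousAt) ?_
  filter_upwards [hopen.mem_nhds (by simp)] with x hx
  simp only [Set.mem_preimage, Set.mem_singleton_iff] at hx
  rw [hx]

/-- Iterated cocycle sums. -/
def cocyc {X : Type*} (T : X → X) (k : X → ℕ) : ℕ → X → ℕ
  | 0 => fun _ => 0
  | n + 1 => fun x => cocyc T k n x + k (T^[n] x)

lemma continuous_cocyc {X : Type*} [TopologicalSpace X] {T : X → X} {k : X → ℕ}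
    (hT : Continuous T) (hk : Continuous k) (n : ℕ) : Continuous (cocyc T k n) := by
  induction n with
  | zero => exact continuous_const
  | succ n ih => exact ih.add (hk.comp (hT.iterate n))

lemma cocyc_spec {X Y : Type*} (T : X → X) (U : Y → Y) (f : X → Y) (k l : X → ℕ)
    (H : ∀ x, U^[k x] (f (T x)) = U^[l x] (f x)) :
    ∀ n x, U^[cocyc T k n x] (f (T^[n] x)) = U^[cocyc T l n x] (f x) := by
  intro n
  induction n with
  | zero => intro x; rfl
  | succ n ih =>
    intro x
    show U^[cocyc T k n x + k (T^[n] x)] (f (T^[n + 1] x)) =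
      U^[cocyc T l n x + l (T^[n] x)] (f x)
    rw [Function.iterate_succ_apply' T n x]
    rw [Function.iterate_add_apply U (cocyc T k n x) (k (T^[n] x)) _]
    rw [H (T^[n] x)]
    rw [← Function.iterate_add_apply U (cocyc T k n x) (l (T^[n] x)) _]
    rw [Nat.add_comm (cocyc T k n x) (l (T^[n] x))]
    rw [Function.iterate_add_apply U (l (T^[n] x)) (cocyc T k n x) _]
    rw [ih x]
    rw [← Function.iterate_add_apply U (l (T^[n] x)) (cocyc T l n x) _]
    rw [Nat.add_comm (l (T^[n] x)) (cocyc T l n x)]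

lemma glue {X Y Z : Type*} [TopologicalSpace X] [TopologicalSpace Y]
    (S : X → X) (T : Y → Y) (U : Z → Z) (f : X → Y) (g : Y → Z)
    (hS : Continuous S) (hT : Continuous T) (hf : Continuous f)
    (k1 l1 : X → ℕ) (hk1 : Continuous k1) (hl1 : Continuous l1)
    (H1 : ∀ x, T^[k1 x] (f (S x)) = T^[l1 x] (f x))
    (k2 l2 : Y → ℕ) (hk2 : Continuous k2) (hl2 : Continuous l2)
    (H2 : ∀ y, U^[k2 y] (g (T y)) = U^[l2 y] (g y)) :
    ∃ k l : X → ℕ, Continuous k ∧ Continuous l ∧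
      ∀ x, U^[k x] (g (f (S x))) = U^[l x] (g (f x)) := by
  refine ⟨fun x => cocyc T k2 (l1 x) (f x) + cocyc T l2 (k1 x) (f (S x)),
    fun x => cocyc T k2 (k1 x) (f (S x)) + cocyc T l2 (l1 x) (f x), ?_, ?_, ?_⟩
  · exact Continuous.add
      (cont_select hl1 fun n => (continuous_cocyc hT hk2 n).comp hf)
      (cont_select hk1 fun n => (continuous_cocyc hT hl2 n).comp (hf.comp hS))
  · exact Continuous.add
      (cont_select hk1 fun n => (continuous_cocyc hT hk2 n).comp (hf.comp hS))
      (cont_select hl1 fun n => (continuous_cocyc hT hl2 n).comp hf)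
  · intro x
    have S1 := cocyc_spec T U g k2 l2 H2 (k1 x) (f (S x))
    have S2 := cocyc_spec T U g k2 l2 H2 (l1 x) (f x)
    rw [H1 x] at S1
    rw [Function.iterate_add_apply, ← S1, ← Function.iterate_add_apply,
      Nat.add_comm, Function.iterate_add_apply, S2, ← Function.iterate_add_apply]

lemma coe_refl {N : ℕ} (A : Mat N) : COE A A :=
  ⟨Homeomorph.refl _,
    ⟨fun _ => 0, fun _ => 1, continuous_const, continuous_const, fun x => by simp⟩,
    ⟨fun _ => 0, fun _ => 1, continuous_const, continuous_const, fun y => by simp⟩⟩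

lemma coe_symm {N N' : ℕ} {A : Mat N} {B : Mat N'} (h : COE A B) : COE B A := by
  obtain ⟨h, H1, H2⟩ := h
  refine ⟨h.symm, H2, ?_⟩
  obtain ⟨k, l, hk, hl, H⟩ := H1
  exact ⟨k, l, hk, hl, fun x => by simpa [Homeomorph.symm_symm] using H x⟩

lemma coe_trans {N₁ N₂ N₃ : ℕ} {A : Mat N₁} {B : Mat N₂} {C : Mat N₃}
    (hAB : COE A B) (hBC : COE B C) : COE A C := by
  obtain ⟨h, ⟨k1, l1, hk1, hl1, H1⟩, ⟨k2, l2, hk2, hl2, H2⟩⟩ := hAB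
  obtain ⟨h', ⟨k1', l1', hk1', hl1', H1'⟩, ⟨k2', l2', hk2', hl2', H2'⟩⟩ := hBC
  refine ⟨h.trans h', ?_, ?_⟩
  · obtain ⟨k, l, hk, hl, H⟩ := glue (shiftS A) (shiftS B) (shiftS C) h h'
      (continuous_shiftS A) (continuous_shiftS B) h.continuous
      k1 l1 hk1 hl1 H1 k1' l1' hk1' hl1' H1'
    exact ⟨k, l, hk, hl, fun x => by simpa using H x⟩
  · obtain ⟨k, l, hk, hl, H⟩ := glue (shiftS C) (shiftS B) (shiftS A) h'.symm h.symm
      (continuous_shiftS C) (continuous_shiftS B) h'.symm.continuous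
      k2' l2' hk2' hl2' H2' k2 l2 hk2 hl2 H2
    exact ⟨k, l, hk, hl, fun y => by simpa using H y⟩

lemma coe_of_conj {N N' : ℕ} {A : Mat N} {B : Mat N'} (h : ↥(SSpace A) ≃ₜ ↥(SSpace B))
    (hc : ∀ x, h (shiftS A x) = shiftS B (h x)) : COE A B := by
  refine ⟨h, ⟨fun _ => 0, fun _ => 1, continuous_const, continuous_const, fun x => ?_⟩,
    ⟨fun _ => 0, fun _ => 1, continuous_const, continuous_const, fun y => ?_⟩⟩
  · simpa using hc x
  · have hy := hc (h.symm y)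
    rw [h.apply_symm_apply] at hy
    simp only [Function.iterate_zero, id_eq, Function.iterate_one]
    rw [← hy, h.symm_apply_apply]

end COEGen

section Main

variable {N M : ℕ} {A : Mat N} {ω : Fin M → List (Fin N)}

lemma coe_code (hN : 0 < N) (hω : IsRightMarkovCode A ω) : COE A (matC A ω) := by
  classical
  obtain ⟨L, hL, hSI⟩ := hω.shiftInv
  have hSI' : ∀ v : Fin L → Fin M, ∃ l' : List (Fin M),
      AdmX A (((List.ofFn v).map ω).flatten) →
        (((List.ofFn v).map ω).flatten).tail = (l'.map ω).flatten := by
    intro v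
    by_cases hadm : AdmX A (((List.ofFn v).map ω).flatten)
    · obtain ⟨l', hl'⟩ := hSI (List.ofFn v) (by simp) hadm
      exact ⟨l', fun _ => hl'⟩
    · exact ⟨[], fun h => absurd h hadm⟩
  set π := codeHomeo hN hω with hπ
  have hval : ∀ (y : ↥(SSpace (matC A ω))) (m : ℕ),
      (π ((shiftS (matC A ω))^[m] y)).1 = fun n => concat hN ω y.1 (pos ω y.1 m + n) := by
    intro y m
    rw [codeHomeo_apply]
    have h1 : ((shiftS (matC A ω))^[m] y).1 = shift^[m] y.1 := by
      rw [shiftS_iter_val, shift_iter_apply]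
    rw [h1]
    funext n
    exact concat_iterate hω.ne y.1 m n
  refine ⟨π.symm, ?_, ?_⟩
  · refine ⟨fun x => (hSI' (fun i : Fin L => (π.symm x).1 i)).choose.length,
      fun _ => L, ?_, continuous_const, ?_⟩
    · exact (continuous_of_discreteTopology
        (f := fun v : Fin L → Fin M => (hSI' v).choose.length)).comp
        (continuous_pi fun i => (continuous_apply ((i : Fin L) : ℕ)).comp
          (continuous_subtype_val.comp π.symm.continuous))
    · intro x
      set v : Fin L → Fin M := fun i => (π.symm x).1 i with hv
      set l' : List (Fin M) := (hSI' v).choose with hl'def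
      have hfx : (π.symm x).1 = fseq hω x := codeHomeo_symm_apply hN hω x
      have hg' : (π.symm (shiftS A x)).1 = fseq hω (shiftS A x) :=
        codeHomeo_symm_apply hN hω _
      have hveq : v = fun i : Fin L => fseq hω x i := by
        funext i; rw [hv, hfx]
      have hflat : ((List.ofFn v).map ω).flatten = cw ω (fseq hω x) L := by
        rw [hveq]
        exact ofFn_flatten L (fseq hω x)
      have hAdmX : AdmX A (((List.ofFn v).map ω).flatten) := by
        refine ⟨x.1, x.2, ?_⟩
        rw [hflat]
        exact begins_cw_fseq hω L x
      have hspec : (((List.ofFn v).map ω).flatten).tail = (l'.map ω).flatten :=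
        (hSI' v).choose_spec hAdmX
      have hbt : Begins (shiftS A x).1 ((l'.map ω).flatten) := by
        rw [← hspec, hflat]
        exact begins_tail (begins_cw_fseq hω L x)
      have hmatch := blocks_match hω l' (shiftS A x) hbt
      have hl'eq : l' = List.ofFn (fun i : Fin l'.length => fseq hω (shiftS A x) i) := by
        refine List.ext_get (by simp) fun i h1 h2 => ?_
        rw [hmatch i h1]
        simp only [List.get_eq_getElem, List.getElem_ofFn]
      have hcwg : (l'.map ω).flatten = cw ω (fseq hω (shiftS A x)) l'.length := by
        conv_lhs => rw [hl'eq]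
        exact ofFn_flatten l'.length (fseq hω (shiftS A x))
      have hlen : pos ω (fseq hω (shiftS A x)) l'.length + 1 = pos ω (fseq hω x) L := by
        have h1 : (cw ω (fseq hω (shiftS A x)) l'.length).length =
            ((cw ω (fseq hω x) L).tail).length := by
          rw [← hcwg, ← hspec, hflat]
        have h2 : 1 ≤ pos ω (fseq hω x) L := le_trans hL (le_pos hω.ne _ L)
        rw [length_cw, List.length_tail, length_cw] at h1
        omega
      refine π.injective (Subtype.ext ?_)
      rw [hval, hval]
      funext n
      rw [hg', hfx]
      rw [concat_fseq hω (shiftS A x), concat_fseq hω x]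
      show x.1 (pos ω (fseq hω (shiftS A x)) l'.length + n + 1) =
        x.1 (pos ω (fseq hω x) L + n)
      exact congrArg x.1 (by omega)
  · refine ⟨fun _ => 0, fun y => (ω (y.1 0)).length, continuous_const, ?_, ?_⟩
    · exact (continuous_of_discreteTopology
        (f := fun j : Fin M => (ω j).length)).comp
        ((continuous_apply 0).comp continuous_subtype_val)
    · intro y
      simp only [Homeomorph.symm_symm, Function.iterate_zero, id_eq]
      refine Subtype.ext ?_
      have h1 : (π (shiftS (matC A ω) y)).1 = concat hN ω (shift y.1) := rfl
      have h2 : ((shiftS A)^[(ω (y.1 0)).length] (π y)).1 =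
          fun n => concat hN ω y.1 ((ω (y.1 0)).length + n) := by
        rw [shiftS_iter_val]
        rfl
      rw [h1, h2]
      funext n
      exact concat_shift hω.ne y.1 n

lemma irrNP_pos {n : ℕ} {C : Mat n} (h : ¬ IsPermMat C) : 0 < n := by
  rcases Nat.eq_zero_or_pos n with rfl | hp
  · exact absurd ⟨fun i => i.elim0, fun i => i.elim0⟩ h
  · exact hp

lemma elem_coe {n n' : ℕ} {C : Mat n} {D : Mat n'} (hC : 0 < n) (hD : 0 < n')
    (h : ElemCodedEq C D) : COE C D := by
  obtain ⟨M₁, M₂, ω₁, ω₂, h1, h2, hh, hconj⟩ := h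
  exact coe_trans (coe_code hC h1)
    (coe_trans (coe_of_conj hh hconj) (coe_symm (coe_code hD h2)))

end Main

/-- Coded equivalence implies continuous orbit equivalence. -/
theorem codedEq_implies_COE {N N' : ℕ} (A : Mat N) (B : Mat N')
    (hA : IrreducibleMat A) (hAp : ¬ IsPermMat A)
    (hB : IrreducibleMat B) (hBp : ¬ IsPermMat B)
    (h : CodedEq ⟨N, A⟩ ⟨N', B⟩) : COE A B := by
  have key : ∀ q : MatS, CodedEq ⟨N, A⟩ q → COE A q.2 := by
    intro q hq
    induction hq with
    | refl => exact coe_refl A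
    | tail h1 h2 ih =>
      exact coe_trans ih (elem_coe (irrNP_pos h2.1.2) (irrNP_pos h2.2.1.2) h2.2.2)
  exact key ⟨N', B⟩ h

end TMS
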